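/- Let (R, m) be a Noetherian local ring of Krull dimension n, let a_{•,0} and a_{•,1} be m-filtrations on R, let (a_{•,t})_{t∈[0,1]} be the geodesic between them, and fix 0 ≤ t < t' ≤ 1. Suppose there are real numbers e_0, e_t, e_{t'}, e_{0,t}, e_{t,t'}, e_{0,t'} such that, as the positive integer m → ∞, n!·ℓ_R(R/a_{m,s})/m^n → e_s for each s ∈ {0, t, t'}, and n!·ℓ_R(R/(a_{m,s} ∩ a_{m,s'}))/m^n → e_{s,s'} for each (s,s') ∈ {(0,t), (t,t'), (0,t')}. Then 2e_{0,t'} − e_0 − e_{t'} = (2e_{0,t} − e_0 − e_t) + (2e_{t,t'} − e_t − e_{t'}); that is, d_1(a_{•,0}, a_{•,t'}) = d_1(a_{•,0}, a_{•,t}) + d_1(a_{•,t}, a_{•,t'}), so the geodesic is distance-minimizing for d_1. -/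

import Mathlib

open IsLocalRing

variable {R : Type*} [CommRing R] [IsNoetherianRing R] [IsLocalRing R]

/-- An ideal is `m`-primary: proper with radical the maximal ideal. -/
def IsPrimaryToMax (R : Type*) [CommRing R] [IsLocalRing R] (I : Ideal R) : Prop :=
  I ≠ ⊤ ∧ I.radical = maximalIdeal R

/-- An `m`-filtration on a Noetherian local ring `(R, m)`: a family of `m`-primary ideals
indexed by `ℝ` (only the values at `λ > 0` matter, with the convention `a 0 = R`),
decreasing, left-continuous and multiplicative. -/
structure IsMFiltration (R : Type*) [CommRing R] [IsLocalRing R] (a : ℝ → Ideal R) : Prop where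
  primary : ∀ lam : ℝ, 0 < lam → IsPrimaryToMax R (a lam)
  antitone : ∀ lam mu : ℝ, 0 < mu → mu < lam → a lam ≤ a mu
  left_cont : ∀ lam : ℝ, 0 < lam → ∃ ε > (0 : ℝ), ∀ ε' : ℝ, 0 < ε' → ε' ≤ ε →
    a (lam - ε') = a lam
  mul : ∀ lam mu : ℝ, 0 < lam → 0 < mu → a lam * a mu ≤ a (lam + mu)
  zero : a 0 = ⊤

/-- The geodesic between two `m`-filtrations `a₀` and `a₁` at time `t`:
`a_{λ,t} = Σ_{μ,ν ≥ 0, (1−t)μ + tν = λ} (a₀_μ ∩ a₁_ν)` (sum of ideals, i.e. supremum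
over all such pairs `(μ, ν)` of nonnegative reals). -/
noncomputable def geodesic {R : Type*} [CommRing R] (a₀ a₁ : ℝ → Ideal R)
    (t lam : ℝ) : Ideal R :=
  ⨆ (p : ℝ × ℝ) (_ : 0 ≤ p.1 ∧ 0 ≤ p.2 ∧ (1 - t) * p.1 + t * p.2 = lam),
    (a₀ p.1 ⊓ a₁ p.2)

/-- The length `ℓ_R(R/I)` as a real number: the supremum of lengths of strictly
increasing chains of submodules of `R/I` (Krull dimension of the submodule lattice),
truncated to a natural number (it is finite for `m`-primary `I`) and cast to `ℝ`. -/
noncomputable def colengthR (R : Type*) [CommRing R] (I : Ideal R) : ℝ :=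
  ((WithBot.unbotD 0 (Order.krullDim (Submodule R (R ⧸ I)))).toNat : ℝ)


set_option linter.unusedSectionVars false

open Order

section OrderPart

variable {α : Type*} [Preorder α]

/-- Lift an `LTSeries` of `α` with head `x` to the subtype `{y // x ≤ y}`. -/
private def liftSeries (p : LTSeries α) (x : α) (hp : x ≤ p.head) :
    LTSeries {y : α // x ≤ y} where
  length := p.length
  toFun i := ⟨p i, hp.trans (p.monotone (Fin.zero_le i))⟩
  step i := p.step i

lemma coheight_subtype_mk_le (x : α) :
    Order.coheight (⟨x, le_rfl⟩ : {y : α // x ≤ y}) = Order.coheight x := by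
  apply le_antisymm
  · exact Order.coheight_le_coheight_apply_of_strictMono Subtype.val (fun a b h => h) _
  · apply Order.coheight_le
    intro p hp
    have h1 : (liftSeries p x hp.ge).head = ⟨x, le_rfl⟩ := Subtype.ext hp
    have := Order.length_le_coheight_head (p := liftSeries p x hp.ge)
    rw [h1] at this
    exact this

lemma krullDim_subtype_le_eq_coheight (x : α) :
    Order.krullDim {y : α // x ≤ y} = Order.coheight x := by
  letI : OrderBot {y : α // x ≤ y} := { bot := ⟨x, le_rfl⟩, bot_le := fun y => y.2 }
  rw [← Order.coheight_bot_eq_krullDim]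
  exact congrArg _ (coheight_subtype_mk_le x)

lemma height_le_coheight_of_le {x : α} (w : {y : α // x ≤ y}) :
    Order.height w ≤ Order.coheight x := by
  apply Order.height_le
  intro q _
  have := Order.length_le_coheight (x := x)
    (p := q.map Subtype.val (fun a b h => h)) (q.head.2)
  exact this

lemma ltSeries_length_le_height_add_height {A B C : Type*} [Preorder A] [Preorder B] [Preorder C]
    (f : A → B) (g : A → C) (hf : Monotone f) (hg : Monotone g)
    (hstrict : ∀ z w : A, z < w → f z < f w ∨ g z < g w) (p : LTSeries A) :
    (p.length : ℕ∞) ≤ Order.height (f p.last) + Order.height (g p.last) := by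
  suffices H : ∀ (n : ℕ) (p : LTSeries A), p.length = n →
      (p.length : ℕ∞) ≤ Order.height (f p.last) + Order.height (g p.last) from H _ p rfl
  intro n
  induction n with
  | zero => intro p hn; rw [hn]; simp
  | succ n ih =>
    intro p hn
    have hlen : p.length ≠ 0 := by omega
    have hq : p.eraseLast.length = n := by simp [hn]
    have hlt : p.eraseLast.last < p.last := p.eraseLast_last_rel_last hlen
    have H := ih p.eraseLast hq
    rw [hq] at H
    rw [hn]
    have cast1 : ((n + 1 : ℕ) : ℕ∞) = (n : ℕ∞) + 1 := by push_cast; ring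
    rcases hstrict _ _ hlt with h | h
    · rcases eq_or_ne (Order.height (f p.last)) ⊤ with htop | htop
      · rw [htop]; simp
      · have h1 : Order.height (f p.eraseLast.last) < ⊤ :=
          lt_of_le_of_lt (Order.height_mono h.le) (lt_top_iff_ne_top.2 htop)
        have h3 : Order.height (f p.eraseLast.last) + 1 ≤ Order.height (f p.last) :=
          (ENat.add_one_le_iff h1.ne).mpr (Order.height_strictMono h h1)
        calc ((n + 1 : ℕ) : ℕ∞) = (n : ℕ∞) + 1 := cast1
          _ ≤ (Order.height (f p.eraseLast.last) + Order.height (g p.eraseLast.last)) + 1 :=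
            add_le_add_left H 1
          _ = (Order.height (f p.eraseLast.last) + 1) + Order.height (g p.eraseLast.last) := by
            rw [add_right_comm]
          _ ≤ Order.height (f p.last) + Order.height (g p.last) :=
            add_le_add h3 (Order.height_mono (hg hlt.le))
    · rcases eq_or_ne (Order.height (g p.last)) ⊤ with htop | htop
      · rw [htop]; simp
      · have h1 : Order.height (g p.eraseLast.last) < ⊤ :=
          lt_of_le_of_lt (Order.height_mono h.le) (lt_top_iff_ne_top.2 htop)
        have h3 : Order.height (g p.eraseLast.last) + 1 ≤ Order.height (g p.last) :=
          (ENat.add_one_le_iff h1.ne).mpr (Order.height_strictMono h h1)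
        calc ((n + 1 : ℕ) : ℕ∞) = (n : ℕ∞) + 1 := cast1
          _ ≤ (Order.height (f p.eraseLast.last) + Order.height (g p.eraseLast.last)) + 1 :=
            add_le_add_left H 1
          _ = Order.height (f p.eraseLast.last) + (Order.height (g p.eraseLast.last) + 1) := by
            rw [add_assoc]
          _ ≤ Order.height (f p.last) + Order.height (g p.last) :=
            add_le_add (Order.height_mono (hf hlt.le)) h3

/-- The "length" of the interval `[x, y]`: the height of `y` inside `Set.Icc x y`. -/
noncomputable def intervalH {α : Type*} [Preorder α] (x y : α) (h : x ≤ y) : ℕ∞ :=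
  Order.height (⟨y, h, le_rfl⟩ : Set.Icc x y)

end OrderPart

section ModularPart

variable {L : Type*} [Lattice L] [IsModularLattice L]

lemma coheight_le_coheight_add_intervalH (x y : L) (h : x ≤ y) :
    Order.coheight x ≤ Order.coheight y + intervalH x y h := by
  apply Order.coheight_le
  intro p hp
  let f : {z : L // x ≤ z} → Set.Icc x y := fun z => ⟨z.1 ⊓ y, le_inf z.2 h, inf_le_right⟩
  let g : {z : L // x ≤ z} → {w : L // y ≤ w} := fun z => ⟨z.1 ⊔ y, le_sup_right⟩
  have hf : Monotone f := fun a b hab => by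
    show a.1 ⊓ y ≤ b.1 ⊓ y
    exact inf_le_inf_right y hab
  have hg : Monotone g := fun a b hab => by
    show a.1 ⊔ y ≤ b.1 ⊔ y
    exact sup_le_sup_right (show a.1 ≤ b.1 from hab) y
  have hstrict : ∀ z w : {z : L // x ≤ z}, z < w → f z < f w ∨ g z < g w := by
    intro z w hzw
    by_cases hcase : f z < f w
    · exact Or.inl hcase
    · refine Or.inr ?_
      have h1 : f z ≤ f w := hf hzw.le
      have h2 : (w.1 ⊓ y : L) ≤ z.1 ⊓ y := ((h1.lt_or_eq.resolve_left hcase).ge : f w ≤ f z)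
      exact (sup_lt_sup_of_lt_of_inf_le_inf (show z.1 < w.1 from hzw) h2 : (z.1 ⊔ y : L) < w.1 ⊔ y)
  have key := ltSeries_length_le_height_add_height f g hf hg hstrict (liftSeries p x hp.ge)
  have hlen : (liftSeries p x hp.ge).length = p.length := rfl
  rw [hlen] at key
  refine key.trans ?_
  rw [add_comm (Order.coheight y)]
  gcongr
  · exact Order.height_mono (show (f _).1 ≤ y from inf_le_right)
  · exact height_le_coheight_of_le _

lemma coheight_add_intervalH_le (x y : L) (h : x ≤ y) :
    Order.coheight y + intervalH x y h ≤ Order.coheight x := by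
  haveI : Nonempty {q : LTSeries L // q.head = y} := ⟨RelSeries.singleton _ y, rfl⟩
  rw [Order.coheight_eq_iSup_head_eq, iSup_subtype', ENat.iSup_add]
  apply iSup_le
  rintro ⟨q, hq⟩
  haveI : Nonempty {p : LTSeries (Set.Icc x y) // p.last = ⟨y, h, le_rfl⟩} :=
    ⟨RelSeries.singleton _ _, rfl⟩
  rw [intervalH, Order.height_eq_iSup_last_eq, iSup_subtype', ENat.add_iSup]
  apply iSup_le
  rintro ⟨p, hplast⟩
  -- combine: p (in Icc x y, ending at y) then q (starting at y)
  let pv := p.map Subtype.val (fun a b hab => hab)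
  have hconnect : pv.last = q.head := by
    rw [hq]
    show (p.last : L) = y
    rw [hplast]
  have hhead : x ≤ (pv.smash q hconnect).head := by
    rw [RelSeries.head_smash]
    exact p.head.2.1
  have := Order.length_le_coheight hhead
  simp only [RelSeries.smash_length, pv, RelSeries.map_length] at this
  calc (q.length : ℕ∞) + p.length = ((p.length + q.length : ℕ) : ℕ∞) := by push_cast; ring
    _ ≤ _ := by exact_mod_cast this

lemma coheight_eq_coheight_add_intervalH (x y : L) (h : x ≤ y) :
    Order.coheight x = Order.coheight y + intervalH x y h :=
  le_antisymm (coheight_le_coheight_add_intervalH x y h) (coheight_add_intervalH_le x y h)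

lemma intervalH_inf_eq_sup (B C : L) :
    intervalH (B ⊓ C) B inf_le_left = intervalH C (B ⊔ C) le_sup_right := by
  have := Order.height_orderIso (infIccOrderIsoIccSup B C)
    (⟨B, inf_le_left, le_rfl⟩ : Set.Icc (B ⊓ C) B)
  rw [intervalH, intervalH, ← this]
  congr 1

/-- The key diamond identity for coheights in a modular lattice. -/
lemma coheight_inf_add_coheight_sup (B C : L) :
    Order.coheight (B ⊓ C) + Order.coheight (B ⊔ C)
      = Order.coheight B + Order.coheight C := by
  rw [coheight_eq_coheight_add_intervalH (B ⊓ C) B inf_le_left,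
    coheight_eq_coheight_add_intervalH C (B ⊔ C) le_sup_right, intervalH_inf_eq_sup]
  abel

lemma intervalH_le_one_of_covBy {x y : L} (h : x ⋖ y) (hle : x ≤ y) :
    intervalH x y hle ≤ 1 := by
  apply Order.height_le
  intro p _
  by_contra hc
  push_neg at hc
  have h2' : (1 : ℕ) < p.length := by exact_mod_cast hc
  have h2 : 2 ≤ p.length := h2'
  have h01 : p ⟨0, by omega⟩ < p ⟨1, by omega⟩ := p.strictMono (by simp [Fin.lt_def])
  have h12 : p ⟨1, by omega⟩ < p ⟨2, by omega⟩ := p.strictMono (by simp [Fin.lt_def])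
  have hx : x < (p ⟨1, by omega⟩ : Set.Icc x y) := lt_of_le_of_lt (p ⟨0, by omega⟩).2.1 h01
  have hy : ((p ⟨1, by omega⟩ : Set.Icc x y) : L) < y := lt_of_lt_of_le h12 (p ⟨2, by omega⟩).2.2
  exact h.2 hx hy

lemma coheight_head_le_of_covBySeries (s : RelSeries {(a, b) : L × L | a ⋖ b}) :
    Order.coheight s.head ≤ Order.coheight s.last + s.length := by
  suffices H : ∀ (n : ℕ) (s : RelSeries {(a, b) : L × L | a ⋖ b}), s.length = n →
      Order.coheight s.head ≤ Order.coheight s.last + s.length from H _ s rfl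
  intro n
  induction n with
  | zero =>
    intro s hn
    have : s.head = s.last := congrArg s (Fin.ext (by simp [hn, RelSeries.last, Fin.last]))
    rw [this, hn]; simp
  | succ n ih =>
    intro s hn
    have hlen : s.length ≠ 0 := by omega
    have hq : s.eraseLast.length = n := by simp [hn]
    have hcov : s.eraseLast.last ⋖ s.last := s.eraseLast_last_rel_last hlen
    have H1 := ih s.eraseLast hq
    rw [RelSeries.head_eraseLast, hq] at H1
    have H2 : Order.coheight s.eraseLast.last ≤ Order.coheight s.last + 1 := by
      refine (coheight_le_coheight_add_intervalH _ _ hcov.le).trans ?_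
      exact add_le_add_right (intervalH_le_one_of_covBy hcov hcov.le) _
    calc Order.coheight s.head ≤ Order.coheight s.eraseLast.last + n := H1
      _ ≤ (Order.coheight s.last + 1) + n := add_le_add_left H2 n
      _ = Order.coheight s.last + s.length := by rw [hn]; push_cast; ring

lemma coheight_bot_ne_top_of_wf [BoundedOrder L] [WellFoundedLT L] [WellFoundedGT L] :
    Order.coheight (⊥ : L) ≠ ⊤ := by
  obtain ⟨f, hmin, m, hmax, hcov⟩ := exists_covBy_seq_of_wellFoundedLT_wellFoundedGT L
  let s : RelSeries {(a, b) : L × L | a ⋖ b} := ⟨m, fun i => f i, fun i => hcov i i.2⟩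
  have h1 : s.head = ⊥ := hmin.eq_bot
  have h2 : s.last = ⊤ := hmax.eq_top
  have := coheight_head_le_of_covBySeries s
  rw [h1, h2] at this
  simp only [Order.coheight_top, zero_add] at this
  exact fun hc => by
    rw [hc] at this
    exact (lt_irrefl (⊤ : ℕ∞)) (lt_of_le_of_lt this (by exact_mod_cast ENat.coe_lt_top s.length))

end ModularPart

section AlgebraPart

open IsLocalRing Submodule

variable {R : Type*} [CommRing R]

/-- The correspondence: submodules of `R ⧸ I` biject with submodules of `R ⧸ q` above the
image of `I`, whenever `q ≤ I`. -/
noncomputable def quotQuotOrderIso {q I : Ideal R} (hqI : q ≤ I) :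
    Submodule R (R ⧸ I) ≃o {N : Submodule R (R ⧸ q) // Submodule.map q.mkQ I ≤ N} := by
  refine (Submodule.comapMkQRelIso I).trans ?_
  exact {
    toFun := fun J => ⟨Submodule.map q.mkQ J.1, Submodule.map_mono J.2⟩
    invFun := fun N => ⟨Submodule.comap q.mkQ N.1,
      (Submodule.le_comap_map q.mkQ I).trans (Submodule.comap_mono N.2)⟩
    left_inv := fun J => Subtype.ext (by
      show Submodule.comap q.mkQ (Submodule.map q.mkQ J.1) = J.1
      rw [Submodule.comap_map_mkQ]
      exact sup_eq_right.2 (hqI.trans J.2))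
    right_inv := fun N => Subtype.ext
      (Submodule.map_comap_eq_of_surjective q.mkQ_surjective N.1)
    map_rel_iff' := by
      intro J J'
      constructor
      · intro hmap
        have h2 : Submodule.comap q.mkQ (Submodule.map q.mkQ J.1)
            ≤ Submodule.comap q.mkQ (Submodule.map q.mkQ J'.1) := Submodule.comap_mono hmap
        rw [Submodule.comap_map_mkQ, Submodule.comap_map_mkQ,
          sup_eq_right.2 (hqI.trans J.2), sup_eq_right.2 (hqI.trans J'.2)] at h2
        exact h2
      · exact fun h => Submodule.map_mono h }

lemma krullDim_quot_eq_coheight {q I : Ideal R} (hqI : q ≤ I) :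
    Order.krullDim (Submodule R (R ⧸ I))
      = Order.coheight (Submodule.map q.mkQ I : Submodule R (R ⧸ q)) := by
  rw [Order.krullDim_eq_of_orderIso (quotQuotOrderIso hqI)]
  exact krullDim_subtype_le_eq_coheight _

lemma colengthR_eq_coheight {q I : Ideal R} (hqI : q ≤ I) :
    colengthR R I
      = ((Order.coheight (Submodule.map q.mkQ I : Submodule R (R ⧸ q))).toNat : ℝ) := by
  rw [colengthR, krullDim_quot_eq_coheight hqI]
  norm_num [WithBot.unbotD_coe]

variable [IsLocalRing R]

theorem isArtinian_of_quotient_tower {I : Ideal R} {M : Type*} [AddCommGroup M] [Module R M]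
    [Module (R ⧸ I) M] [IsScalarTower R (R ⧸ I) M]
    (h : IsArtinian (R ⧸ I) M) : IsArtinian R M := by
  have hsmul : ∀ (r : R) (x : M), (Ideal.Quotient.mk I r) • x = r • x := fun r x => by
    rw [← Ideal.Quotient.algebraMap_eq, algebraMap_smul]
  let φ : Submodule R M → Submodule (R ⧸ I) M := fun N =>
    { carrier := N
      add_mem' := fun ha hb => N.add_mem ha hb
      zero_mem' := N.zero_mem
      smul_mem' := fun s x hx => by
        obtain ⟨r, rfl⟩ := Ideal.Quotient.mk_surjective s
        rw [hsmul]
        exact N.smul_mem r hx }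
  have hφ : StrictMono φ := by
    intro a b hab
    refine lt_of_le_of_ne (fun x hx => hab.le hx) (fun heq => hab.ne ?_)
    have h2 := congrArg (SetLike.coe) heq
    exact SetLike.ext' h2
  exact hφ.wellFoundedLT

theorem isArtinian_of_max_annihilates (M : Type*) [AddCommGroup M] [Module R M]
    [IsNoetherian R M]
    (hann : ∀ x ∈ maximalIdeal R, ∀ v : M, x • v = 0) : IsArtinian R M := by
  have hTor : Module.IsTorsionBySet R M (maximalIdeal R : Set R) :=
    fun v x => hann x.1 x.2 v
  letI : Module (R ⧸ maximalIdeal R) M := hTor.module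
  haveI : IsScalarTower R (R ⧸ maximalIdeal R) M := hTor.isScalarTower
  haveI : Module.Finite R M := ⟨(IsNoetherian.noetherian ⊤)⟩
  haveI : Module.Finite (R ⧸ maximalIdeal R) M :=
    Module.Finite.of_restrictScalars_finite R (R ⧸ maximalIdeal R) M
  letI : Field (R ⧸ maximalIdeal R) := Ideal.Quotient.field _
  haveI : IsArtinianRing (R ⧸ maximalIdeal R) := DivisionRing.instIsArtinianRing
  haveI : IsArtinian (R ⧸ maximalIdeal R) M := isArtinian_of_fg_of_artinian'
  exact isArtinian_of_quotient_tower ‹IsArtinian (R ⧸ maximalIdeal R) M›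

variable [IsNoetherianRing R]

theorem isArtinian_of_pow_annihilates (K : ℕ) (M : Type*) [AddCommGroup M] [Module R M]
    [IsNoetherian R M]
    (hann : ∀ x ∈ (maximalIdeal R) ^ K, ∀ v : M, x • v = 0) : IsArtinian R M := by
  induction K generalizing M with
  | zero =>
    haveI : Subsingleton M := ⟨fun a b => by
      have := hann 1 (by rw [pow_zero, Ideal.one_eq_top]; trivial) (a - b)
      rw [one_smul, sub_eq_zero] at this
      exact this⟩
    infer_instance
  | succ K ih =>
    set N : Submodule R M := (maximalIdeal R) ^ K • (⊤ : Submodule R M) with hN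
    haveI hNart : IsArtinian R N := by
      apply isArtinian_of_max_annihilates
      intro x hx v
      apply Subtype.ext
      show x • (v : M) = 0
      have hv : (v : M) ∈ (maximalIdeal R ^ K • (⊤ : Submodule R M)) := v.2
      refine Submodule.smul_induction_on hv ?_ ?_
      · intro a ha w _
        rw [smul_smul]
        refine hann (x * a) ?_ w
        rw [pow_succ, mul_comm x a]
        exact Ideal.mul_mem_mul ha hx
      · intro u w hu hw
        rw [smul_add, hu, hw, add_zero]
    haveI hQart : IsArtinian R (M ⧸ N) := by
      apply ih
      intro x hx v
      obtain ⟨w, rfl⟩ := N.mkQ_surjective v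
      rw [← map_smul, Submodule.mkQ_apply, Submodule.Quotient.mk_eq_zero]
      exact Submodule.smul_mem_smul hx trivial
    exact (isArtinian_iff_submodule_quotient N).mpr ⟨hNart, hQart⟩


theorem colength_add_identity (b c : Ideal R) (K : ℕ)
    (hK : (maximalIdeal R) ^ K ≤ b ⊓ c) :
    colengthR R (b ⊓ c) + colengthR R (b ⊔ c) = colengthR R b + colengthR R c := by
  set q : Ideal R := b ⊓ c with hq
  haveI hart : IsArtinian R (R ⧸ q) := isArtinian_of_pow_annihilates K (R ⧸ q) (by
    intro x hx v
    obtain ⟨r, rfl⟩ := q.mkQ_surjective v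
    rw [← map_smul, Submodule.mkQ_apply, Submodule.Quotient.mk_eq_zero]
    show x • r ∈ q
    rw [smul_eq_mul]
    exact Ideal.mul_mem_right r q (hK hx))
  have hbotfin : Order.coheight (⊥ : Submodule R (R ⧸ q)) ≠ ⊤ := coheight_bot_ne_top_of_wf
  have hfin : ∀ N : Submodule R (R ⧸ q), Order.coheight N ≠ ⊤ := fun N h =>
    hbotfin (top_unique (h ▸ Order.coheight_anti (bot_le : (⊥ : Submodule R (R ⧸ q)) ≤ N)))
  set B := Submodule.map q.mkQ b with hB
  set C := Submodule.map q.mkQ c with hC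
  have hmapinf : Submodule.map q.mkQ q = B ⊓ C := by
    apply Submodule.comap_injective_of_surjective q.mkQ_surjective
    rw [Submodule.comap_inf, hB, hC, Submodule.comap_map_mkQ, Submodule.comap_map_mkQ,
      Submodule.comap_map_mkQ, sup_idem, sup_eq_right.2 (inf_le_left : q ≤ b),
      sup_eq_right.2 (inf_le_right : q ≤ c)]
  have hmapsup : Submodule.map q.mkQ (b ⊔ c) = B ⊔ C := Submodule.map_sup b c q.mkQ
  have key : Order.coheight (Submodule.map q.mkQ q)
        + Order.coheight (Submodule.map q.mkQ (b ⊔ c))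
      = Order.coheight B + Order.coheight C := by
    rw [hmapinf, hmapsup]
    exact coheight_inf_add_coheight_sup B C
  have keyN := congrArg ENat.toNat key
  rw [ENat.toNat_add (hfin _) (hfin _), ENat.toNat_add (hfin _) (hfin _)] at keyN
  rw [colengthR_eq_coheight (le_refl q), colengthR_eq_coheight (inf_le_left : q ≤ b),
    colengthR_eq_coheight (inf_le_right : q ≤ c),
    colengthR_eq_coheight ((inf_le_left : q ≤ b).trans le_sup_left)]
  exact_mod_cast keyN

end AlgebraPart

section GeodesicPart

open IsLocalRing

variable {R : Type*} [CommRing R] [IsLocalRing R] {a₀ a₁ : ℝ → Ideal R}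

lemma IsMFiltration.mono {a : ℝ → Ideal R} (h : IsMFiltration R a) {x y : ℝ}
    (hx : 0 ≤ x) (hxy : x ≤ y) : a y ≤ a x := by
  rcases eq_or_lt_of_le hx with h0 | h0
  · rw [← h0, h.zero]; exact le_top
  · rcases eq_or_lt_of_le hxy with heq | hlt
    · rw [heq]
    · exact h.antitone y x h0 hlt

lemma le_geodesic (t lam : ℝ) {p : ℝ × ℝ}
    (hp : 0 ≤ p.1 ∧ 0 ≤ p.2 ∧ (1 - t) * p.1 + t * p.2 = lam) :
    a₀ p.1 ⊓ a₁ p.2 ≤ geodesic a₀ a₁ t lam := by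
  rw [geodesic]
  exact le_iSup_of_le p (le_iSup_of_le hp le_rfl)

lemma geodesic_le {t lam : ℝ} {I : Ideal R}
    (h : ∀ p : ℝ × ℝ, (0 ≤ p.1 ∧ 0 ≤ p.2 ∧ (1 - t) * p.1 + t * p.2 = lam) →
      a₀ p.1 ⊓ a₁ p.2 ≤ I) :
    geodesic a₀ a₁ t lam ≤ I := by
  rw [geodesic]
  exact iSup_le fun p => iSup_le fun hp => h p hp

lemma inf_le_geodesic (h₀ : IsMFiltration R a₀) (h₁ : IsMFiltration R a₁)
    {t mu nu lam : ℝ} (ht0 : 0 ≤ t) (ht1 : t ≤ 1) (hmu : 0 ≤ mu) (hnu : 0 ≤ nu)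
    (hlam : 0 ≤ lam) (hle : lam ≤ (1 - t) * mu + t * nu) :
    a₀ mu ⊓ a₁ nu ≤ geodesic a₀ a₁ t lam := by
  have hS : 0 ≤ (1 - t) * mu + t * nu :=
    add_nonneg (mul_nonneg (by linarith) hmu) (mul_nonneg ht0 hnu)
  rcases eq_or_lt_of_le hS with hS0 | hSpos
  · have hlam0 : lam = 0 := le_antisymm (by rw [← hS0] at hle; exact hle) hlam
    refine le_trans ?_ (le_geodesic t lam (p := (0, 0))
      ⟨le_rfl, le_rfl, by simp [hlam0]⟩)
    rw [h₀.zero, h₁.zero]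
    simp
  · set s := lam / ((1 - t) * mu + t * nu) with hs
    have hs0 : 0 ≤ s := div_nonneg hlam hS
    have hs1 : s ≤ 1 := (div_le_one hSpos).mpr hle
    refine le_trans ?_ (le_geodesic t lam (p := (s * mu, s * nu))
      ⟨mul_nonneg hs0 hmu, mul_nonneg hs0 hnu, ?_⟩)
    · exact inf_le_inf
        (h₀.mono (mul_nonneg hs0 hmu) (by simpa using mul_le_of_le_one_left hmu hs1))
        (h₁.mono (mul_nonneg hs0 hnu) (by simpa using mul_le_of_le_one_left hnu hs1))
    · have : (1 - t) * (s * mu) + t * (s * nu) = s * ((1 - t) * mu + t * nu) := by ring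
      rw [this, hs, div_mul_cancel₀ _ (ne_of_gt hSpos)]

lemma geodesic_zero (h₀ : IsMFiltration R a₀) (h₁ : IsMFiltration R a₁)
    {lam : ℝ} (hlam : 0 ≤ lam) : geodesic a₀ a₁ 0 lam = a₀ lam := by
  apply le_antisymm
  · apply geodesic_le
    rintro p ⟨h1, h2, h3⟩
    have hp1 : p.1 = lam := by linarith
    exact inf_le_left.trans (le_of_eq (by rw [hp1]))
  · refine le_trans ?_ (le_geodesic 0 lam (p := (lam, 0)) ⟨hlam, le_rfl, by ring⟩)
    exact le_inf le_rfl (by rw [h₁.zero]; exact le_top)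

lemma inf_geodesic_le_geodesic (h₀ : IsMFiltration R a₀) (h₁ : IsMFiltration R a₁)
    {t t' lam : ℝ} (ht : 0 ≤ t) (htt' : t < t') (ht' : t' ≤ 1) (hlam : 0 < lam) :
    a₀ lam ⊓ geodesic a₀ a₁ t' lam ≤ geodesic a₀ a₁ t lam := by
  have ht'0 : 0 < t' := lt_of_le_of_lt ht htt'
  have ht1 : t ≤ 1 := le_of_lt (lt_of_lt_of_le htt' ht')
  set cnd : ℝ × ℝ → Prop :=
    fun p => 0 ≤ p.1 ∧ 0 ≤ p.2 ∧ (1 - t') * p.1 + t' * p.2 = lam with hcnd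
  set A : Ideal R := ⨆ (p : ℝ × ℝ) (_ : cnd p ∧ lam ≤ p.1), (a₀ p.1 ⊓ a₁ p.2) with hA
  set B : Ideal R := ⨆ (p : ℝ × ℝ) (_ : cnd p ∧ p.1 < lam), (a₀ p.1 ⊓ a₁ p.2) with hB
  have hsplit : geodesic a₀ a₁ t' lam = A ⊔ B := by
    apply le_antisymm
    · apply geodesic_le
      intro p hp
      rcases le_or_gt lam p.1 with hc | hc
      · exact le_sup_of_le_left (le_iSup_of_le p (le_iSup_of_le ⟨hp, hc⟩ le_rfl))
      · exact le_sup_of_le_right (le_iSup_of_le p (le_iSup_of_le ⟨hp, hc⟩ le_rfl))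
    · apply sup_le
      · exact iSup_le fun p => iSup_le fun hp => le_geodesic t' lam hp.1
      · exact iSup_le fun p => iSup_le fun hp => le_geodesic t' lam hp.1
  have hA0 : A ≤ a₀ lam := by
    refine iSup_le fun p => iSup_le ?_
    rintro ⟨⟨h1, h2, h3⟩, h4⟩
    exact inf_le_left.trans (h₀.mono hlam.le h4)
  have hAg : A ≤ geodesic a₀ a₁ t lam := by
    refine iSup_le fun p => iSup_le ?_
    rintro ⟨⟨h1, h2, h3⟩, h4⟩
    apply inf_le_geodesic h₀ h₁ ht ht1 h1 h2 hlam.le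
    nlinarith [mul_nonneg (sub_nonneg.2 htt'.le) (sub_nonneg.2 h4)]
  have hBg : B ≤ a₁ lam := by
    refine iSup_le fun p => iSup_le ?_
    rintro ⟨⟨h1, h2, h3⟩, h4⟩
    refine inf_le_right.trans (h₁.mono hlam.le ?_)
    nlinarith [mul_pos ht'0 (sub_pos.2 h4)]
  have hmod : a₀ lam ⊓ (A ⊔ B) = A ⊔ (B ⊓ a₀ lam) := by
    rw [inf_comm]
    exact sup_inf_assoc_of_le B hA0
  rw [hsplit, hmod]
  apply sup_le hAg
  refine le_trans (inf_le_inf_right _ hBg) ?_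
  refine le_trans ?_ (inf_le_geodesic h₀ h₁ ht ht1 hlam.le hlam.le hlam.le
    (le_of_eq (by ring)))
  rw [inf_comm]

lemma sup_inf_geodesic_eq (h₀ : IsMFiltration R a₀) (h₁ : IsMFiltration R a₁)
    {t t' lam : ℝ} (ht : 0 ≤ t) (htt' : t < t') (ht' : t' ≤ 1) (hlam : 0 < lam) :
    (a₀ lam ⊓ geodesic a₀ a₁ t lam) ⊔ (geodesic a₀ a₁ t lam ⊓ geodesic a₀ a₁ t' lam)
      = geodesic a₀ a₁ t lam := by
  have ht'0 : 0 < t' := lt_of_le_of_lt ht htt'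
  have ht1 : t ≤ 1 := le_of_lt (lt_of_lt_of_le htt' ht')
  apply le_antisymm (sup_le inf_le_right inf_le_left)
  apply geodesic_le
  rintro p ⟨h1, h2, h3⟩
  have hgen : a₀ p.1 ⊓ a₁ p.2 ≤ geodesic a₀ a₁ t lam := le_geodesic t lam ⟨h1, h2, h3⟩
  rcases le_or_gt lam p.1 with hc | hc
  · refine le_sup_of_le_left (le_inf ?_ hgen)
    exact inf_le_left.trans (h₀.mono hlam.le hc)
  · refine le_sup_of_le_right (le_inf hgen ?_)
    apply inf_le_geodesic h₀ h₁ (ht.trans htt'.le) ht' h1 h2 hlam.le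
    have htpos : 0 < t := by
      rcases eq_or_lt_of_le ht with h0 | h0
      · exfalso; rw [← h0] at h3; simp at h3; linarith
      · exact h0
    have hp2 : lam < p.2 := by nlinarith [mul_pos htpos (sub_pos.2 hc)]
    nlinarith [mul_nonneg (sub_nonneg.2 htt'.le) (sub_nonneg.2 (le_of_lt (hc.trans hp2)))]

end GeodesicPart

/-- The geodesic between two `m`-filtrations is distance-minimizing for `d₁`: if the
normalized colengths of `a_{•,0}`, `a_{•,t}`, `a_{•,t'}` and of their pairwise
intersections converge (to the multiplicities `e(·)`), then
`d₁(a_{•,0}, a_{•,t'}) = d₁(a_{•,0}, a_{•,t}) + d₁(a_{•,t}, a_{•,t'})`, where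
`d₁(a_•, b_•) = 2e(a_• ∩ b_•) − e(a_•) − e(b_•)`. -/
theorem geodesic_distance_minimizing (n : ℕ) (hdim : ringKrullDim R = n)
    (a₀ a₁ : ℝ → Ideal R)
    (h₀ : IsMFiltration R a₀) (h₁ : IsMFiltration R a₁)
    (t t' : ℝ) (ht : 0 ≤ t) (htt' : t < t') (ht' : t' ≤ 1)
    (e0 et et' e0t ett' e0t' : ℝ)
    (he0 : Filter.Tendsto (fun m : ℕ =>
      (n.factorial : ℝ) * colengthR R (geodesic a₀ a₁ 0 m) / (m : ℝ) ^ n)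
      Filter.atTop (nhds e0))
    (het : Filter.Tendsto (fun m : ℕ =>
      (n.factorial : ℝ) * colengthR R (geodesic a₀ a₁ t m) / (m : ℝ) ^ n)
      Filter.atTop (nhds et))
    (het' : Filter.Tendsto (fun m : ℕ =>
      (n.factorial : ℝ) * colengthR R (geodesic a₀ a₁ t' m) / (m : ℝ) ^ n)
      Filter.atTop (nhds et'))
    (he0t : Filter.Tendsto (fun m : ℕ =>
      (n.factorial : ℝ) * colengthR R (geodesic a₀ a₁ 0 m ⊓ geodesic a₀ a₁ t m) / (m : ℝ) ^ n)
      Filter.atTop (nhds e0t))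
    (hett' : Filter.Tendsto (fun m : ℕ =>
      (n.factorial : ℝ) * colengthR R (geodesic a₀ a₁ t m ⊓ geodesic a₀ a₁ t' m) / (m : ℝ) ^ n)
      Filter.atTop (nhds ett'))
    (he0t' : Filter.Tendsto (fun m : ℕ =>
      (n.factorial : ℝ) * colengthR R (geodesic a₀ a₁ 0 m ⊓ geodesic a₀ a₁ t' m) / (m : ℝ) ^ n)
      Filter.atTop (nhds e0t')) :
    2 * e0t' - e0 - et' = (2 * e0t - e0 - et) + (2 * ett' - et - et') := by
  have key : ∀ m : ℕ, 1 ≤ m →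
      colengthR R (geodesic a₀ a₁ 0 m ⊓ geodesic a₀ a₁ t' m)
          + colengthR R (geodesic a₀ a₁ t m)
        = colengthR R (geodesic a₀ a₁ 0 m ⊓ geodesic a₀ a₁ t m)
          + colengthR R (geodesic a₀ a₁ t m ⊓ geodesic a₀ a₁ t' m) := by
    intro m hm
    have hlam : (0:ℝ) < m := by exact_mod_cast hm
    have hg0 : geodesic a₀ a₁ 0 (m:ℝ) = a₀ m := geodesic_zero h₀ h₁ hlam.le
    set b : Ideal R := a₀ m ⊓ geodesic a₀ a₁ t m with hb
    set c : Ideal R := geodesic a₀ a₁ t m ⊓ geodesic a₀ a₁ t' m with hc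
    have hbc_inf : b ⊓ c = a₀ m ⊓ geodesic a₀ a₁ t' m := by
      apply le_antisymm
      · exact le_inf (inf_le_left.trans inf_le_left) (inf_le_right.trans inf_le_right)
      · have h2 : a₀ (m:ℝ) ⊓ geodesic a₀ a₁ t' m ≤ geodesic a₀ a₁ t m :=
          inf_geodesic_le_geodesic h₀ h₁ ht htt' ht' hlam
        exact le_inf (le_inf inf_le_left h2) (le_inf h2 inf_le_right)
    have hbc_sup : b ⊔ c = geodesic a₀ a₁ t m :=
      sup_inf_geodesic_eq h₀ h₁ ht htt' ht' hlam
    obtain ⟨k0, hk0⟩ := Ideal.exists_radical_pow_le_of_fg (a₀ m) (IsNoetherian.noetherian _)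
    obtain ⟨k1, hk1⟩ := Ideal.exists_radical_pow_le_of_fg (a₁ m) (IsNoetherian.noetherian _)
    rw [(h₀.primary m hlam).2] at hk0
    rw [(h₁.primary m hlam).2] at hk1
    have hKle : (maximalIdeal R) ^ (k0 + k1) ≤ a₀ m ⊓ a₁ m := by
      rw [pow_add]
      exact le_trans (Ideal.mul_mono hk0 hk1) Ideal.mul_le_inf
    have hinfgeo : ∀ s : ℝ, 0 ≤ s → s ≤ 1 →
        a₀ (m:ℝ) ⊓ a₁ (m:ℝ) ≤ geodesic a₀ a₁ s m := fun s hs0 hs1 =>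
      inf_le_geodesic h₀ h₁ hs0 hs1 hlam.le hlam.le hlam.le (le_of_eq (by ring))
    have ht1 : t ≤ 1 := le_of_lt (lt_of_lt_of_le htt' ht')
    have hK : (maximalIdeal R) ^ (k0 + k1) ≤ b ⊓ c := by
      refine le_inf (le_inf (hKle.trans inf_le_left) ?_)
        (le_inf ?_ (hKle.trans (hinfgeo t' (ht.trans htt'.le) ht')))
      · exact hKle.trans (hinfgeo t ht ht1)
      · exact hKle.trans (hinfgeo t ht ht1)
    have hid := colength_add_identity b c (k0 + k1) hK
    rw [hbc_inf, hbc_sup] at hid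
    rw [hg0]
    linarith
  have h5 := he0t'.add het
  have h6 := he0t.add hett'
  have heq : (fun m : ℕ =>
        (n.factorial : ℝ) * colengthR R (geodesic a₀ a₁ 0 m ⊓ geodesic a₀ a₁ t' m) / (m : ℝ) ^ n
        + (n.factorial : ℝ) * colengthR R (geodesic a₀ a₁ t m) / (m : ℝ) ^ n)
      =ᶠ[Filter.atTop] (fun m : ℕ =>
        (n.factorial : ℝ) * colengthR R (geodesic a₀ a₁ 0 m ⊓ geodesic a₀ a₁ t m) / (m : ℝ) ^ n
        + (n.factorial : ℝ) * colengthR R (geodesic a₀ a₁ t m ⊓ geodesic a₀ a₁ t' m)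
          / (m : ℝ) ^ n) := by
    filter_upwards [Filter.eventually_ge_atTop 1] with m hm
    have hkey := key m hm
    rw [← add_div, ← add_div, ← mul_add, ← mul_add, hkey]
  have huniq : e0t' + et = e0t + ett' := tendsto_nhds_unique (h5.congr' heq) h6
  linarith
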